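/- In the LiMES setup with seed function Ψ := ||| · |||, an arbitrary norm on Z, assume that at least one of the following holds: (i) c₂ = 0; (ii) range M₂ = Z; or (iii) 𝒜₂ x̂ = 0 for some x̂ ∈ X. Then the smooth part F(x) := ½‖𝒜₁x‖² − μ·inf_{v∈Z} [ |||v||| + ½‖D(𝓛𝒜₂x − v)‖² ] is a proper lower-semicontinuous convex function on X if and only if condition (♠) holds, i.e., M₁*M₁ − μ M₂*𝓛*D²𝓛M₂ is positive semidefinite. -/
import Mathlib


open scoped RealInnerProductSpace

noncomputable section

private theorem quad_combo' {E : Type*} [NormedAddCommGroup E] [InnerProductSpace ℝ E]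
    (u v : E) (a b : ℝ) (hab : a + b = 1) :
    a*(‖u‖^2/2) + b*(‖v‖^2/2) - ‖a•u + b•v‖^2/2 = a*b*(‖u - v‖^2/2) := by
  have hb : b = 1 - a := by linarith
  subst hb
  have h1 : ‖a•u + (1-a)•v‖^2 = a^2*‖u‖^2 + 2*(a*(1-a))*⟪u,v⟫ + (1-a)^2*‖v‖^2 := by
    rw [norm_add_sq_real, real_inner_smul_left, real_inner_smul_right, norm_smul, norm_smul,
      mul_pow, mul_pow, Real.norm_eq_abs, Real.norm_eq_abs, sq_abs, sq_abs]
    ring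
  have h2 : ‖u - v‖^2 = ‖u‖^2 - 2*⟪u,v⟫ + ‖v‖^2 := norm_sub_sq_real u v
  rw [h1, h2]; ring

/-- Any norm on a finite-dimensional real normed space is dominated by the ambient norm. -/
private theorem norm_seed_upper_bound {Z : Type*} [NormedAddCommGroup Z]
    [NormedSpace ℝ Z] [FiniteDimensional ℝ Z]
    (N : Z → ℝ) (hN1 : ∀ (a : ℝ) (z : Z), N (a • z) = |a| * N z)
    (hN2 : ∀ z w : Z, N (z + w) ≤ N z + N w) :
    ∃ K : ℝ, ∀ z : Z, N z ≤ K * ‖z‖ := by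
  have hN0 : N 0 = 0 := by simpa using hN1 0 0
  classical
  set b := Module.finBasis ℝ Z with hb
  have hsum : ∀ (s : Finset (Fin (Module.finrank ℝ Z))) (f : Fin (Module.finrank ℝ Z) → Z),
      N (∑ i ∈ s, f i) ≤ ∑ i ∈ s, N (f i) := by
    intro s f
    induction s using Finset.cons_induction with
    | empty => simp [hN0]
    | cons a s ha ih =>
      rw [Finset.sum_cons, Finset.sum_cons]
      exact le_trans (hN2 _ _) (by linarith)
  have hco : ∀ i, ∃ C : ℝ, ∀ z : Z, |b.repr z i| ≤ C * ‖z‖ := by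
    intro i
    let f := LinearMap.toContinuousLinearMap (b.coord i)
    refine ⟨‖f‖, fun z => ?_⟩
    have := f.le_opNorm z
    simpa [f, Real.norm_eq_abs] using this
  choose C hC using hco
  refine ⟨∑ i, C i * N (b i), fun z => ?_⟩
  have hrepr : N z ≤ ∑ i, |b.repr z i| * N (b i) := by
    calc N z = N (∑ i, b.repr z i • b i) := by rw [b.sum_repr]
      _ ≤ ∑ i, N (b.repr z i • b i) := hsum _ _
      _ = ∑ i, |b.repr z i| * N (b i) := by simp [hN1]
  have hNnn : ∀ v : Z, 0 ≤ N v := by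
    intro v
    have h := hN2 v (-v)
    have h' : N (-v) = N v := by simpa using hN1 (-1) v
    simp only [add_neg_cancel, hN0, h'] at h
    linarith
  calc N z ≤ ∑ i, |b.repr z i| * N (b i) := hrepr
    _ ≤ ∑ i, (C i * ‖z‖) * N (b i) := by
        refine Finset.sum_le_sum fun i _ => ?_
        exact mul_le_mul_of_nonneg_right (hC i z) (hNnn _)
    _ = (∑ i, C i * N (b i)) * ‖z‖ := by rw [Finset.sum_mul]; congr 1; ext i; ring

set_option maxHeartbeats 1000000 in
theorem limes_norm_seed_convexity_iff
    {X Y Z : Type*}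
    [NormedAddCommGroup X] [InnerProductSpace ℝ X] [FiniteDimensional ℝ X]
    [NormedAddCommGroup Y] [InnerProductSpace ℝ Y] [FiniteDimensional ℝ Y]
    [NormedAddCommGroup Z] [InnerProductSpace ℝ Z] [FiniteDimensional ℝ Z]
    (M₁ : X →ₗ[ℝ] Y) (hM₁ : M₁ ≠ 0) (M₂ : X →ₗ[ℝ] Z) (hM₂ : M₂ ≠ 0)
    (c₁ : Y) (c₂ : Z) (L : Z →ₗ[ℝ] Z) (hL : L ≠ 0)
    (D : Z →ₗ[ℝ] Z) (hDsa : ∀ u v : Z, ⟪D u, v⟫ = ⟪u, D v⟫)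
    (hDpd : ∀ z : Z, z ≠ 0 → 0 < ⟪D z, z⟫)
    (μ : ℝ) (hμ : 0 < μ)
    (N : Z → ℝ) (hN1 : ∀ (a : ℝ) (z : Z), N (a • z) = |a| * N z)
    (hN2 : ∀ z w : Z, N (z + w) ≤ N z + N w)
    (hN3 : ∀ z : Z, N z = 0 → z = 0)
    (hcase : c₂ = 0 ∨ Function.Surjective M₂ ∨ ∃ xhat : X, M₂ xhat + c₂ = 0) :
    (LowerSemicontinuous (fun x : X =>
        ‖M₁ x + c₁‖ ^ 2 / 2 -
          μ * ⨅ v : Z, (N v + ‖D (L (M₂ x + c₂) - v)‖ ^ 2 / 2)) ∧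
      ConvexOn ℝ Set.univ (fun x : X =>
        ‖M₁ x + c₁‖ ^ 2 / 2 -
          μ * ⨅ v : Z, (N v + ‖D (L (M₂ x + c₂) - v)‖ ^ 2 / 2)))
    ↔ (∀ x : X, μ * ‖D (L (M₂ x))‖ ^ 2 ≤ ‖M₁ x‖ ^ 2) := by
  have hN0 : N 0 = 0 := by simpa using hN1 0 0
  have hNneg : ∀ v : Z, N (-v) = N v := fun v => by simpa using hN1 (-1) v
  have hNnn : ∀ v : Z, 0 ≤ N v := by
    intro v
    have h := hN2 v (-v)
    simp only [add_neg_cancel, hN0, hNneg] at h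
    linarith
  set e : Z → ℝ := fun w => ⨅ v : Z, (N v + ‖D (w - v)‖ ^ 2 / 2) with he
  set F : X → ℝ := fun x => ‖M₁ x + c₁‖ ^ 2 / 2 - μ * e (L (M₂ x + c₂)) with hF
  have hbdd : ∀ w : Z, BddBelow (Set.range fun v : Z => N v + ‖D (w - v)‖ ^ 2 / 2) := by
    intro w
    refine ⟨0, ?_⟩
    rintro r ⟨v, rfl⟩
    have := hNnn v
    positivity
  have he_le : ∀ w v : Z, e w ≤ N v + ‖D (w - v)‖ ^ 2 / 2 := fun w v => ciInf_le (hbdd w) v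
  have he_le' : ∀ w : Z, e w ≤ ‖D w‖ ^ 2 / 2 := by
    intro w
    simpa [hN0] using he_le w 0
  have he_nonneg : ∀ w : Z, 0 ≤ e w := by
    intro w
    refine le_ciInf fun v => ?_
    have := hNnn v
    positivity
  have he0 : e 0 = 0 := by
    refine le_antisymm ?_ (he_nonneg 0)
    have := he_le' 0
    simpa using this
  -- semiconcavity of the Moreau-type envelope
  have hsemi : ∀ (w w' : Z) (a bb : ℝ), 0 ≤ a → 0 ≤ bb → a + bb = 1 →
      a * e w + bb * e w' ≤ e (a • w + bb • w') + a * bb * (‖D (w - w')‖ ^ 2 / 2) := by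
    intro w w' a bb ha hb hab
    refine le_of_forall_pos_le_add ?_
    intro ε hε
    obtain ⟨v, hv⟩ : ∃ v : Z,
        N v + ‖D (a • w + bb • w' - v)‖ ^ 2 / 2 < e (a • w + bb • w') + ε := by
      apply exists_lt_of_ciInf_lt
      linarith
    have h1 := mul_le_mul_of_nonneg_left (he_le w v) ha
    have h2 := mul_le_mul_of_nonneg_left (he_le w' v) hb
    have key : a * (‖D (w - v)‖ ^ 2 / 2) + bb * (‖D (w' - v)‖ ^ 2 / 2)
        = ‖D (a • w + bb • w' - v)‖ ^ 2 / 2 + a * bb * (‖D (w - w')‖ ^ 2 / 2) := by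
      have hq := quad_combo' (D (w - v)) (D (w' - v)) a bb hab
      have h3 : a • D (w - v) + bb • D (w' - v) = D (a • w + bb • w' - v) := by
        rw [← map_smul, ← map_smul, ← map_add]
        congr 1
        have hb1 : bb = 1 - a := by linarith
        subst hb1
        module
      have h4 : D (w - v) - D (w' - v) = D (w - w') := by
        rw [← map_sub]
        congr 1
        abel
      rw [h3, h4] at hq
      linarith
    have hNv : a * N v + bb * N v = N v := by rw [← add_mul, hab, one_mul]
    nlinarith [h1, h2, key, hNv, hv]
  constructor
  · -- convexity implies (♠)
    rintro ⟨-, hconv⟩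
    -- the lower bound constant for N
    obtain ⟨K, hK⟩ := norm_seed_upper_bound N hN1 hN2
    have hlip : LipschitzWith (Real.toNNReal K) N := by
      refine LipschitzWith.of_dist_le_mul fun z w => ?_
      have h1 : N z - N w ≤ N (z - w) := by
        have := hN2 w (z - w)
        simp only [add_sub_cancel] at this
        linarith
      have h2 : N w - N z ≤ N (z - w) := by
        have := hN2 z (w - z)
        simp only [add_sub_cancel] at this
        have hneg : N (w - z) = N (z - w) := by
          rw [← hNneg (w - z)]
          congr 1
          abel
        linarith
      have h3 : N (z - w) ≤ K * ‖z - w‖ := hK _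
      have h4 : K * ‖z - w‖ ≤ (Real.toNNReal K : ℝ) * ‖z - w‖ :=
        mul_le_mul_of_nonneg_right (Real.le_coe_toNNReal K) (norm_nonneg _)
      rw [Real.dist_eq, dist_eq_norm, abs_sub_le_iff]
      exact ⟨by linarith, by linarith⟩
    have hcont : Continuous N := hlip.continuous
    -- minimum of N on the unit sphere
    obtain ⟨x₀, hx₀⟩ : ∃ x : X, M₂ x ≠ 0 := by
      by_contra h
      push_neg at h
      exact hM₂ (LinearMap.ext fun x => by simp [h x])
    have hu₀ : (‖M₂ x₀‖⁻¹ • M₂ x₀) ∈ Metric.sphere (0 : Z) 1 := by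
      rw [mem_sphere_zero_iff_norm]
      exact norm_smul_inv_norm hx₀
    obtain ⟨zmin, hzmem, hzmin⟩ :=
      (isCompact_sphere (0 : Z) 1).exists_isMinOn ⟨_, hu₀⟩ hcont.continuousOn
    set c : ℝ := N zmin with hc
    have hzne : zmin ≠ 0 := by
      intro h
      rw [mem_sphere_zero_iff_norm, h, norm_zero] at hzmem
      norm_num at hzmem
    have hcpos : 0 < c := by
      rcases lt_or_eq_of_le (hNnn zmin) with h | h
      · exact h
      · exact absurd (hN3 zmin h.symm) hzne
    have hlow : ∀ v : Z, c * ‖v‖ ≤ N v := by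
      intro v
      rcases eq_or_ne v 0 with rfl | hv
      · simp [hN0]
      · have hmem : (‖v‖⁻¹ • v) ∈ Metric.sphere (0 : Z) 1 := by
          rw [mem_sphere_zero_iff_norm]
          exact norm_smul_inv_norm hv
        have hcle : c ≤ N (‖v‖⁻¹ • v) := hzmin hmem
        have hval : N (‖v‖⁻¹ • v) = ‖v‖⁻¹ * N v := by
          rw [hN1, abs_of_nonneg (by positivity)]
        rw [hval] at hcle
        have hvpos : 0 < ‖v‖ := norm_pos_iff.mpr hv
        calc c * ‖v‖ ≤ (‖v‖⁻¹ * N v) * ‖v‖ :=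
              mul_le_mul_of_nonneg_right hcle hvpos.le
          _ = N v := by field_simp
    -- the point annihilating the affine part
    obtain ⟨xh, hxh⟩ : ∃ xh : X, M₂ xh + c₂ = 0 := by
      rcases hcase with h | h | h
      · exact ⟨0, by simp [h]⟩
      · obtain ⟨xh, hxh⟩ := h (-c₂)
        exact ⟨xh, by rw [hxh]; simp⟩
      · exact h
    intro x
    set w₀ : Z := L (M₂ x) with hw₀
    set δ : ℝ := c / (‖D (D w₀)‖ + 1) with hδdef
    have hδ : 0 < δ := by positivity
    have hsmall : ∀ t : ℝ, |t| ≤ δ → ‖D (D (t • w₀))‖ ≤ c := by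
      intro t ht
      rw [map_smul, map_smul, norm_smul, Real.norm_eq_abs]
      have h1 : |t| * ‖D (D w₀)‖ ≤ δ * ‖D (D w₀)‖ :=
        mul_le_mul_of_nonneg_right ht (norm_nonneg _)
      have h2 : δ * ‖D (D w₀)‖ ≤ c := by
        rw [hδdef, div_mul_eq_mul_div, div_le_iff₀ (by positivity)]
        nlinarith [hcpos.le, norm_nonneg (D (D w₀))]
      linarith
    have hge : ∀ t : ℝ, |t| ≤ δ → ‖D (t • w₀)‖ ^ 2 / 2 ≤ e (t • w₀) := by
      intro t ht
      refine le_ciInf fun v => ?_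
      have h1 : ⟪D (t • w₀), D v⟫ ≤ N v := by
        calc ⟪D (t • w₀), D v⟫ = ⟪D (D (t • w₀)), v⟫ := (hDsa _ v).symm
          _ ≤ ‖D (D (t • w₀))‖ * ‖v‖ := real_inner_le_norm _ _
          _ ≤ c * ‖v‖ := mul_le_mul_of_nonneg_right (hsmall t ht) (norm_nonneg _)
          _ ≤ N v := hlow v
      have h2 : ‖D (t • w₀ - v)‖ ^ 2
          = ‖D (t • w₀)‖ ^ 2 - 2 * ⟪D (t • w₀), D v⟫ + ‖D v‖ ^ 2 := by
        rw [map_sub]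
        exact norm_sub_sq_real _ _
      nlinarith [sq_nonneg ‖D v‖]
    have heq : ∀ t : ℝ, |t| ≤ δ → e (t • w₀) = ‖D (t • w₀)‖ ^ 2 / 2 :=
      fun t ht => le_antisymm (he_le' _) (hge t ht)
    -- apply convexity at the three points
    have hmid : (1/2 : ℝ) • (xh + δ • x) + (1/2 : ℝ) • (xh - δ • x) = xh := by module
    have hcv := hconv.2 (Set.mem_univ (xh + δ • x)) (Set.mem_univ (xh - δ • x))
      (by norm_num : (0:ℝ) ≤ 1/2) (by norm_num : (0:ℝ) ≤ 1/2) (by norm_num : (1:ℝ)/2 + 1/2 = 1)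
    rw [hmid] at hcv
    simp only [hF, smul_eq_mul] at hcv
    have hm1 : M₂ (xh + δ • x) + c₂ = δ • M₂ x := by
      rw [map_add, map_smul, add_right_comm, hxh, zero_add]
    have hm2 : M₂ (xh - δ • x) + c₂ = (-δ) • M₂ x := by
      rw [map_sub, map_smul, sub_add_eq_add_sub, hxh, zero_sub, ← neg_smul]
    have hw1 : L (M₂ (xh + δ • x) + c₂) = δ • w₀ := by
      rw [hm1, map_smul, ← hw₀]
    have hw2 : L (M₂ (xh - δ • x) + c₂) = (-δ) • w₀ := by
      rw [hm2, map_smul, ← hw₀]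
    have hw3 : L (M₂ xh + c₂) = 0 := by rw [hxh, map_zero]
    have hA1 : M₁ (xh + δ • x) + c₁ = (M₁ xh + c₁) + δ • M₁ x := by
      rw [map_add, map_smul]; abel
    have hA2 : M₁ (xh - δ • x) + c₁ = (M₁ xh + c₁) - δ • M₁ x := by
      rw [map_sub, map_smul]; abel
    have heq1 : e (δ • w₀) = δ ^ 2 * ‖D w₀‖ ^ 2 / 2 := by
      rw [heq δ (by rw [abs_of_pos hδ]), map_smul, norm_smul, Real.norm_eq_abs,
        abs_of_pos hδ, mul_pow]
    have heq2 : e ((-δ) • w₀) = δ ^ 2 * ‖D w₀‖ ^ 2 / 2 := by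
      rw [heq (-δ) (by rw [abs_neg, abs_of_pos hδ]), map_smul, norm_smul,
        Real.norm_eq_abs, abs_neg, abs_of_pos hδ, mul_pow]
    rw [hw1, hw2, hw3, hA1, hA2, heq1, heq2, he0] at hcv
    set p : Y := M₁ xh + c₁ with hp
    have hpar : ‖p + δ • M₁ x‖ ^ 2 + ‖p - δ • M₁ x‖ ^ 2
        = 2 * ‖p‖ ^ 2 + 2 * (δ ^ 2 * ‖M₁ x‖ ^ 2) := by
      rw [norm_add_sq_real, norm_sub_sq_real, norm_smul, Real.norm_eq_abs, mul_pow, sq_abs]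
      ring
    have hδ2 : 0 < δ ^ 2 := pow_pos hδ 2
    nlinarith [hcv, hpar, hδ2]
  · -- (♠) implies LSC + convexity
    intro hsp
    have hconv : ConvexOn ℝ Set.univ F := by
      refine ⟨convex_univ, ?_⟩
      intro x _ y _ a bb ha hb hab
      simp only [hF, smul_eq_mul]
      set u : Y := M₁ x + c₁ with hu
      set u' : Y := M₁ y + c₁ with hu'
      set w : Z := L (M₂ x + c₂) with hw
      set w' : Z := L (M₂ y + c₂) with hw'
      have hb1 : bb = 1 - a := by linarith
      have haff1 : M₁ (a • x + bb • y) + c₁ = a • u + bb • u' := by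
        have h : M₁ (a • x + bb • y) + c₁ = a • (M₁ x + c₁) + bb • (M₁ y + c₁) := by
          subst hb1
          simp only [map_add, map_smul, smul_add]
          module
        rw [h, hu, hu']
      have haff2 : L (M₂ (a • x + bb • y) + c₂) = a • w + bb • w' := by
        have h : M₂ (a • x + bb • y) + c₂ = a • (M₂ x + c₂) + bb • (M₂ y + c₂) := by
          subst hb1
          simp only [map_add, map_smul, smul_add]
          module
        rw [h, map_add, map_smul, map_smul, hw, hw']
      rw [haff1, haff2]
      have hq := quad_combo' u u' a bb hab
      have hs := hsemi w w' a bb ha hb hab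
      have hdiff : w - w' = L (M₂ (x - y)) := by
        rw [hw, hw', ← map_sub]
        congr 1
        rw [map_sub]
        abel
      have hudiff : u - u' = M₁ (x - y) := by
        rw [hu, hu', map_sub]
        abel
      have hsp' := hsp (x - y)
      rw [← hdiff, ← hudiff] at hsp'
      have hab2 : 0 ≤ a * bb := mul_nonneg ha hb
      nlinarith [mul_le_mul_of_nonneg_left hs hμ.le,
        mul_le_mul_of_nonneg_left hsp' hab2, hq]
    exact ⟨hconv.locallyLipschitz.continuous.lowerSemicontinuous, hconv⟩
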